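/- Let f be a log-concave probability mass function on ℤ. Then there exists a two-sided geometric probability mass function φ on ℤ with sup_n φ(n) = sup_n f(n) such that f majorizes φ. -/

import Mathlib

open Real

/-- `p` is a probability mass function on `ℤ`. -/
def IsPMF (p : ℤ → ℝ) : Prop :=
  (∀ n, 0 ≤ p n) ∧ Summable p ∧ ∑' n, p n = 1

/-- `p` is log-concave: `p(n)² ≥ p(n−1)·p(n+1)` and contiguous support. -/
def IsLogConcavePMF (p : ℤ → ℝ) : Prop :=
  (∀ n : ℤ, p (n - 1) * p (n + 1) ≤ p n ^ 2) ∧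
  (∀ a b c : ℤ, a ≤ b → b ≤ c → 0 < p a → 0 < p c → 0 < p b)

/-- The largest possible sum of `f` over `k` integers. -/
noncomputable def maxSum (f : ℤ → ℝ) (k : ℕ) : ℝ :=
  ⨆ S : {S : Finset ℤ // S.card = k}, ∑ i ∈ S.1, f i

/-- `f` majorizes `g`. -/
def Majorizes (f g : ℤ → ℝ) : Prop :=
  (∀ k : ℕ, maxSum g k ≤ maxSum f k) ∧ ∑' n, f n = ∑' n, g n

/-- The two-sided geometric pmf with parameters `p, q ∈ [0,1)` and mode `m`. -/
noncomputable def twoSidedGeom (p q : ℝ) (m : ℤ) : ℤ → ℝ :=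
  fun n =>
    (1 - p) * (1 - q) / (1 - p * q) *
      (if m ≤ n then p ^ (n - m).toNat else q ^ (m - n).toNat)

namespace LCAux

/-- right tail sum from `c` -/
noncomputable def Rt (g : ℤ → ℝ) (c : ℤ) : ℝ := ∑' k : ℕ, g (c + k)

lemma summable_shift {g : ℤ → ℝ} (hs : Summable g) (c : ℤ) :
    Summable (fun k : ℕ => g (c + k)) :=
  hs.comp_injective (fun x y h => by simpa using h : Function.Injective (fun k : ℕ => c + (k : ℤ)))

lemma summable_shift_neg {g : ℤ → ℝ} (hs : Summable g) (c : ℤ) :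
    Summable (fun k : ℕ => g (c - k)) :=
  hs.comp_injective (fun x y h => by simpa using h : Function.Injective (fun k : ℕ => c - (k : ℤ)))

lemma Rt_nonneg {g : ℤ → ℝ} (hg : ∀ n, 0 ≤ g n) (c : ℤ) : 0 ≤ Rt g c :=
  tsum_nonneg fun _ => hg _

lemma Rt_succ {g : ℤ → ℝ} (hs : Summable g) (c : ℤ) : Rt g c = g c + Rt g (c + 1) := by
  rw [Rt, Summable.tsum_eq_zero_add (summable_shift hs c)]
  congr 1
  · norm_num
  · rw [Rt]
    apply tsum_congr
    intro k
    congr 1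
    push_cast
    ring

lemma Rt_antitone {g : ℤ → ℝ} (hg : ∀ n, 0 ≤ g n) (hs : Summable g) (c : ℤ) :
    Rt g (c + 1) ≤ Rt g c := by
  rw [Rt_succ hs c]; linarith [hg c]

lemma Rt_range {g : ℤ → ℝ} (hs : Summable g) :
    ∀ t : ℕ, ∀ c : ℤ, Rt g c = (∑ k ∈ Finset.range t, g (c + k)) + Rt g (c + t) := by
  intro t
  induction t with
  | zero => intro c; simp
  | succ t ih =>
    intro c
    rw [ih c, Finset.sum_range_succ]
    have h1 : Rt g (c + t) = g (c + t) + Rt g (c + t + 1) := Rt_succ hs (c + t)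
    rw [h1]
    have e : c + ((t : ℤ) + 1) = c + t + 1 := by ring
    push_cast
    rw [e]
    ring

lemma chain {g : ℤ → ℝ} (hg : ∀ n, 0 ≤ g n)
    (hlc : ∀ n : ℤ, g (n - 1) * g (n + 1) ≤ g n ^ 2)
    (hctg : ∀ a b c : ℤ, a ≤ b → b ≤ c → 0 < g a → 0 < g c → 0 < g b) :
    ∀ n k : ℤ, n ≤ k → g (n - 1) * g (k + 1) ≤ g n * g k := by
  intro n k hk
  refine Int.le_induction (motive := fun j _ => g (n - 1) * g (j + 1) ≤ g n * g j) ?_ ?_ k hk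
  · have := hlc n; nlinarith
  · intro k hk ih
    rcases lt_or_eq_of_le (hg (k + 1)) with hk1 | hk1
    · rcases lt_or_eq_of_le (hg k) with hk0 | hk0
      · have h2 := hlc (k + 1)
        have h3 : k + 1 - 1 = k := by ring
        have h4 : k + 1 + 1 = k + 2 := by ring
        rw [h3, h4] at h2
        have h5 := mul_le_mul ih h2 (mul_nonneg (hg k) (hg (k + 2)))
          (mul_nonneg (hg n) (hg k))
        rw [h4]
        nlinarith [hg (n - 1), hg n, hg (k + 2)]
      · have hn1 : g (n - 1) = 0 := by
          by_contra h
          have hpos : 0 < g (n - 1) := lt_of_le_of_ne (hg _) (Ne.symm h)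
          have h6 := hctg (n - 1) k (k + 1) (by omega) (by omega) hpos hk1
          rw [← hk0] at h6
          exact lt_irrefl _ h6
        rw [hn1, zero_mul]
        exact mul_nonneg (hg _) (hg _)
    · have h7 : g (n - 1) = 0 ∨ g (k + 1 + 1) = 0 := by
        by_contra h
        push_neg at h
        have h1 : 0 < g (n - 1) := lt_of_le_of_ne (hg _) (Ne.symm h.1)
        have h2 : 0 < g (k + 1 + 1) := lt_of_le_of_ne (hg _) (Ne.symm h.2)
        have h8 := hctg (n - 1) (k + 1) (k + 1 + 1) (by omega) (by omega) h1 h2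
        rw [← hk1] at h8
        exact lt_irrefl _ h8
      rcases h7 with h | h <;> rw [h] <;> simp only [zero_mul, mul_zero] <;>
        exact mul_nonneg (hg _) (hg _)

section Tail

variable {g : ℤ → ℝ} (hg : ∀ n, 0 ≤ g n) (hs : Summable g)
    (hlc : ∀ n : ℤ, g (n - 1) * g (n + 1) ≤ g n ^ 2)
    (hctg : ∀ a b c : ℤ, a ≤ b → b ≤ c → 0 < g a → 0 < g c → 0 < g b)

include hg hs hlc hctg

lemma tail_step (c : ℤ) : g c * Rt g (c + 2) ≤ g (c + 1) * Rt g (c + 1) := by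
  rw [Rt, Rt, ← tsum_mul_left, ← tsum_mul_left]
  refine Summable.tsum_le_tsum ?_ ((summable_shift hs (c + 2)).mul_left _)
    ((summable_shift hs (c + 1)).mul_left _)
  intro k
  have h := chain hg hlc hctg (c + 1) (c + 1 + k) (by omega)
  have e1 : c + 1 - 1 = c := by ring
  have e2 : c + 1 + (k : ℤ) + 1 = c + 2 + k := by ring
  rw [e1, e2] at h
  exact h

lemma Rt_lc (c : ℤ) : Rt g c * Rt g (c + 2) ≤ Rt g (c + 1) ^ 2 := by
  have h1 : Rt g c = g c + Rt g (c + 1) := Rt_succ hs c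
  have h2 : Rt g (c + 1) = g (c + 1) + Rt g (c + 2) := by
    have := Rt_succ hs (c + 1); rwa [show c + 1 + 1 = c + 2 by ring] at this
  nlinarith [tail_step hg hs hlc hctg c, Rt_nonneg hg (c + 1), Rt_nonneg hg (c + 2),
    hg c, hg (c + 1)]

lemma ratio_chain (c : ℤ) :
    ∀ j : ℕ, Rt g (c + 1 + j) * Rt g c ≤ Rt g (c + j) * Rt g (c + 1) := by
  intro j
  induction j with
  | zero => simp [mul_comm]
  | succ j ih =>
    have lc := Rt_lc hg hs hlc hctg (c + j)
    rcases lt_or_eq_of_le (Rt_nonneg hg (c + j)) with hpos | hzero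
    · have e1 : c + 1 + ((j : ℤ) + 1) = (c + j) + 2 := by ring
      have e2 : c + ((j : ℤ) + 1) = (c + j) + 1 := by ring
      have e3 : c + 1 + (j : ℤ) = (c + j) + 1 := by ring
      push_cast
      rw [e1, e2]
      rw [e3] at ih
      nlinarith [Rt_nonneg hg c, Rt_nonneg hg ((c + j) + 1), Rt_nonneg hg ((c + j) + 2)]
    · have hz : Rt g (c + j) = 0 := hzero.symm
      have h1 : Rt g (c + j + 1) ≤ 0 := by rw [← hz]; exact Rt_antitone hg hs _
      have h2 : Rt g (c + j + 2) ≤ 0 := le_trans (by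
        have := Rt_antitone hg hs (c + j + 1)
        rwa [show c + j + 1 + 1 = c + j + 2 by ring] at this) h1
      have h1' : Rt g (c + j + 1) = 0 := le_antisymm h1 (Rt_nonneg hg _)
      have h2' : Rt g (c + j + 2) = 0 := le_antisymm h2 (Rt_nonneg hg _)
      have e1 : c + 1 + ((j : ℤ) + 1) = c + j + 2 := by ring
      have e2 : c + ((j : ℤ) + 1) = c + j + 1 := by ring
      push_cast
      rw [e1, e2, h1', h2', zero_mul, zero_mul]

lemma tail_geom (c : ℤ) (hpos : 0 < Rt g c) :
    ∀ j : ℕ, Rt g (c + 1 + j) ≤ Rt g (c + 1) * (Rt g (c + 1) / Rt g c) ^ j := by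
  intro j
  induction j with
  | zero => simp
  | succ j ih =>
    have hrc := ratio_chain hg hs hlc hctg c (j + 1)
    have e1 : c + ((j : ℤ) + 1) = c + 1 + j := by ring
    push_cast at hrc
    rw [e1] at hrc
    have hθ : 0 ≤ Rt g (c + 1) / Rt g c := div_nonneg (Rt_nonneg hg _) hpos.le
    have step : Rt g (c + 1 + ((j : ℤ) + 1)) ≤ Rt g (c + 1 + j) * (Rt g (c + 1) / Rt g c) := by
      rw [← mul_div_assoc, le_div_iff₀ hpos]
      exact hrc
    push_cast
    calc Rt g (c + 1 + ((j : ℤ) + 1)) ≤ Rt g (c + 1 + j) * (Rt g (c + 1) / Rt g c) := step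
      _ ≤ (Rt g (c + 1) * (Rt g (c + 1) / Rt g c) ^ j) * (Rt g (c + 1) / Rt g c) :=
          mul_le_mul_of_nonneg_right ih hθ
      _ = Rt g (c + 1) * (Rt g (c + 1) / Rt g c) ^ (j + 1) := by ring

end Tail

lemma hasSum_int_split (h : ℤ → ℝ) (c : ℤ) {A B : ℝ}
    (hA : HasSum (fun k : ℕ => h (c - k)) A)
    (hB : HasSum (fun k : ℕ => h (c + 1 + k)) B) :
    HasSum h (A + B) := by
  have key : ∀ n : ℤ, (Int.rec (fun k : ℕ => h (c + 1 + k)) (fun k : ℕ => h (c - k)) : ℤ → ℝ)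
      (n - (c + 1)) = h n := by
    intro n
    rcases le_or_gt (c + 1) n with hn | hn
    · have hk : n - (c + 1) = ((n - (c + 1)).toNat : ℤ) := by omega
      rw [hk]
      show h (c + 1 + ((n - (c + 1)).toNat : ℤ)) = h n
      congr 1
      omega
    · have hk : n - (c + 1) = Int.negSucc (c - n).toNat := by
        rw [Int.negSucc_eq]
        omega
      rw [hk]
      show h (c - ((c - n).toNat : ℤ)) = h n
      congr 1
      omega
  have hsum : HasSum (Int.rec (fun k : ℕ => h (c + 1 + k)) (fun k : ℕ => h (c - k)) : ℤ → ℝ)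
      (B + A) := HasSum.int_rec hB hA
  have h2 := (Equiv.subRight (c + 1)).hasSum_iff.mpr hsum
  rw [show (B + A) = (A + B) by ring] at h2
  convert h2 using 1
  funext n
  exact (key n).symm

lemma exchange (φ : ℤ → ℝ) (J S : Finset ℤ) (hcard : S.card ≤ J.card)
    (c0 : ℝ) (hc0 : 0 ≤ c0) (hin : ∀ n ∈ J, c0 ≤ φ n) (hout : ∀ n ∉ J, φ n ≤ c0) :
    ∑ i ∈ S, φ i ≤ ∑ i ∈ J, φ i := by
  classical
  have h1 : ∑ i ∈ S ∩ J, φ i + ∑ i ∈ S \ J, φ i = ∑ i ∈ S, φ i :=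
    Finset.sum_inter_add_sum_sdiff S J φ
  have h1' : ∑ i ∈ J ∩ S, φ i + ∑ i ∈ J \ S, φ i = ∑ i ∈ J, φ i :=
    Finset.sum_inter_add_sum_sdiff J S φ
  have h2 : ∑ i ∈ S \ J, φ i ≤ (S \ J).card • c0 :=
    Finset.sum_le_card_nsmul _ _ _ (fun x hx => hout x (Finset.mem_sdiff.1 hx).2)
  have h3 : (S \ J).card ≤ (J \ S).card := by
    have e1 := Finset.card_sdiff_add_card_inter S J
    have e2 := Finset.card_sdiff_add_card_inter J S
    rw [Finset.inter_comm] at e2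
    omega
  have h4 : ((S \ J).card : ℝ) * c0 ≤ ((J \ S).card : ℝ) * c0 :=
    mul_le_mul_of_nonneg_right (Nat.cast_le.2 h3) hc0
  have h5 : (J \ S).card • c0 ≤ ∑ i ∈ J \ S, φ i :=
    Finset.card_nsmul_le_sum _ _ _ (fun x hx => hin x (Finset.mem_sdiff.1 hx).1)
  rw [nsmul_eq_mul] at h2 h5
  have h6 : ∑ i ∈ S ∩ J, φ i = ∑ i ∈ J ∩ S, φ i := by rw [Finset.inter_comm]
  linarith

end LCAux

/-- Every log-concave pmf on `ℤ` majorizes a two-sided geometric pmf with the same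
maximum value. -/
theorem logConcave_majorizes_twoSidedGeom (f : ℤ → ℝ)
    (hpmf : IsPMF f) (hlc : IsLogConcavePMF f) :
    ∃ (p q : ℝ) (m : ℤ), p ∈ Set.Ico (0 : ℝ) 1 ∧ q ∈ Set.Ico (0 : ℝ) 1 ∧
      (⨆ n, twoSidedGeom p q m n) = (⨆ n, f n) ∧
      Majorizes f (twoSidedGeom p q m) := by
  classical
  open LCAux in
  obtain ⟨hf0, hfs, hf1⟩ := hpmf
  obtain ⟨hlc1, hctg⟩ := hlc
  -- the maximum is attained
  have hex : ∃ n₀ : ℤ, 0 < f n₀ := by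
    by_contra hcon
    push_neg at hcon
    have hz : ∀ n, f n = 0 := fun n => le_antisymm (hcon n) (hf0 n)
    have : (1 : ℝ) = 0 := by rw [← hf1]; simp [hz]
    norm_num at this
  obtain ⟨n₀, hn₀⟩ := hex
  have hfin : {n : ℤ | f n₀ ≤ f n}.Finite := by
    have ht := hfs.tendsto_cofinite_zero
    have h2 : ∀ᶠ n in Filter.cofinite, f n ∈ Set.Iio (f n₀) := ht (Iio_mem_nhds hn₀)
    rw [Filter.eventually_cofinite] at h2
    refine h2.subset ?_
    intro n hn
    simp only [Set.mem_setOf_eq, Set.mem_Iio] at *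
    linarith
  have hFne : n₀ ∈ hfin.toFinset := by simp [hfin.mem_toFinset]
  obtain ⟨m, hmF, hmax'⟩ := Finset.exists_max_image hfin.toFinset f ⟨n₀, hFne⟩
  have hm : ∀ n, f n ≤ f m := by
    intro n
    by_cases hn : n ∈ hfin.toFinset
    · exact hmax' n hn
    · have h3 : f n < f n₀ := by
        simp only [hfin.mem_toFinset, Set.mem_setOf_eq, not_le] at hn
        exact hn
      exact le_trans h3.le (hmax' n₀ hFne)
  set M := f m with hMdef
  have hM : 0 < M := lt_of_lt_of_le hn₀ (hm n₀)
  -- the mirrored function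
  set g : ℤ → ℝ := fun n => f (-n) with hgdef
  have hg0 : ∀ n, 0 ≤ g n := fun n => hf0 _
  have hgs : Summable g := hfs.comp_injective neg_injective
  have hglc : ∀ n : ℤ, g (n - 1) * g (n + 1) ≤ g n ^ 2 := by
    intro n
    have h4 := hlc1 (-n)
    simp only [hgdef]
    rw [show -(n - 1) = (-n) + 1 by ring, show -(n + 1) = (-n) - 1 by ring]
    rw [mul_comm]
    exact h4
  have hgctg : ∀ A B C : ℤ, A ≤ B → B ≤ C → 0 < g A → 0 < g C → 0 < g B := by
    intro A B C h1 h2 hA hC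
    exact hctg (-C) (-B) (-A) (by omega) (by omega) hC hA
  -- tails
  set b := Rt f (m + 1) with hbdef
  set a := Rt g (-m + 1) with hadef
  have hb0 : 0 ≤ b := Rt_nonneg hf0 _
  have ha0 : 0 ≤ a := Rt_nonneg hg0 _
  have hRm : Rt f m = M + b := by rw [Rt_succ hfs m]
  have hRgm : Rt g (-m) = M + a := by
    rw [Rt_succ hgs (-m)]
    simp only [hgdef, neg_neg]
    rfl
  have hA0 : HasSum (fun k : ℕ => f (m - k)) (M + a) := by
    have h1 : (fun k : ℕ => f (m - k)) = (fun k : ℕ => g (-m + k)) := by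
      funext k
      simp only [hgdef]
      congr 1
      ring
    rw [h1, ← hRgm]
    exact (summable_shift hgs (-m)).hasSum
  have hB0 : HasSum (fun k : ℕ => f (m + 1 + k)) b := (summable_shift hfs (m + 1)).hasSum
  have htotal : M + a + b = 1 := by
    have h5 := hasSum_int_split f m hA0 hB0
    have h6 : HasSum f 1 := by rw [← hf1]; exact hfs.hasSum
    have := h5.unique h6
    linarith
  -- parameters
  have hMb : (0 : ℝ) < M + b := by linarith
  have hMa : (0 : ℝ) < M + a := by linarith
  set p := b / (M + b) with hpdef
  set q := a / (M + a) with hqdef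
  have hp0 : 0 ≤ p := div_nonneg hb0 hMb.le
  have hq0 : 0 ≤ q := div_nonneg ha0 hMa.le
  have hp1 : p < 1 := (div_lt_one hMb).2 (by linarith)
  have hq1 : q < 1 := (div_lt_one hMa).2 (by linarith)
  have h1p : 1 - p = M / (M + b) := by rw [hpdef]; field_simp; ring
  have h1q : 1 - q = M / (M + a) := by rw [hqdef]; field_simp; ring
  have hpq : 1 - p * q = M / ((M + b) * (M + a)) := by
    rw [hpdef, hqdef]
    field_simp
    ring_nf
    nlinarith [htotal]
  have hC : (1 - p) * (1 - q) / (1 - p * q) = M := by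
    rw [h1p, h1q, hpq]
    field_simp
  -- the two-sided geometric
  set φ := twoSidedGeom p q m with hφdef
  have hφval : ∀ n, φ n = M * (if m ≤ n then p ^ (n - m).toNat else q ^ (m - n).toNat) := by
    intro n
    rw [hφdef, twoSidedGeom, hC]
  have hφr : ∀ j : ℕ, φ (m + j) = M * p ^ j := by
    intro j
    rw [hφval, if_pos (by omega : m ≤ m + (j : ℤ))]
    congr 2
    omega
  have hφl : ∀ j : ℕ, φ (m - j) = M * q ^ j := by
    intro j
    rcases Nat.eq_zero_or_pos j with hj | hj
    · subst hj
      rw [hφval, if_pos (by omega : m ≤ m - ((0 : ℕ) : ℤ))]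
      norm_num
    · rw [hφval, if_neg (by omega : ¬ m ≤ m - (j : ℤ))]
      congr 2
      omega
  have hφ0 : ∀ n, 0 ≤ φ n := by
    intro n
    rw [hφval]
    apply mul_nonneg hM.le
    split <;> positivity
  have hφle : ∀ n, φ n ≤ M := by
    intro n
    rw [hφval]
    have hif : (if m ≤ n then p ^ (n - m).toNat else q ^ (m - n).toNat) ≤ 1 := by
      split
      · exact pow_le_one₀ hp0 hp1.le
      · exact pow_le_one₀ hq0 hq1.le
    nlinarith
  have hφm : φ m = M := by
    have := hφr 0
    simpa using this
  -- geometric sums of φ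
  have hAφ : HasSum (fun k : ℕ => φ (m - k)) (M + a) := by
    have h1 : (fun k : ℕ => φ (m - k)) = (fun k : ℕ => M * q ^ k) := funext hφl
    rw [h1]
    have h2 := (hasSum_geometric_of_lt_one hq0 hq1).mul_left M
    have h3 : M * (1 - q)⁻¹ = M + a := by
      rw [h1q]
      field_simp
    rwa [h3] at h2
  have hBφ : HasSum (fun k : ℕ => φ (m + 1 + k)) b := by
    have h1 : (fun k : ℕ => φ (m + 1 + k)) = (fun k : ℕ => (M * p) * p ^ k) := by
      funext k
      have h2 := hφr (k + 1)
      rw [show m + ((k : ℕ) + 1 : ℕ) = m + 1 + (k : ℕ) by push_cast; ring] at h2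
      rw [h2, pow_succ]
      ring
    rw [h1]
    have h2 := (hasSum_geometric_of_lt_one hp0 hp1).mul_left (M * p)
    have h3 : (M * p) * (1 - p)⁻¹ = b := by
      rw [h1p, hpdef]
      field_simp
    rwa [h3] at h2
  have hφsum : HasSum φ 1 := by
    have h5 := hasSum_int_split φ m hAφ hBφ
    rwa [show (M + a) + b = 1 by linarith] at h5
  have hφs : Summable φ := hφsum.summable
  have hφ1 : ∑' n, φ n = 1 := hφsum.tsum_eq
  -- suprema agree
  have hbddf : BddAbove (Set.range f) := by
    refine ⟨M, ?_⟩
    rintro x ⟨n, rfl⟩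
    exact hm n
  have hbddφ : BddAbove (Set.range φ) := by
    refine ⟨M, ?_⟩
    rintro x ⟨n, rfl⟩
    exact hφle n
  have hsupf : (⨆ n, f n) = M := le_antisymm (ciSup_le hm) (le_ciSup hbddf m)
  have hsupφ : (⨆ n, φ n) = M := by
    refine le_antisymm (ciSup_le hφle) ?_
    have := le_ciSup hbddφ m
    rwa [hφm] at this
  have hpMb : p * (M + b) = b := by rw [hpdef]; field_simp
  have hqMa : q * (M + a) = a := by rw [hqdef]; field_simp
  -- tails of φ
  have hRφr : ∀ r : ℕ, Rt φ (m + 1 + r) = b * p ^ r := by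
    intro r
    have h1 : ∀ k : ℕ, φ (m + 1 + r + k) = (M * p ^ (r + 1)) * p ^ k := by
      intro k
      have h2 := hφr (r + 1 + k)
      rw [show m + ((r + 1 + k : ℕ) : ℤ) = m + 1 + r + k by push_cast; ring] at h2
      rw [h2, pow_add]
      ring
    rw [Rt, tsum_congr h1, tsum_mul_left, tsum_geometric_of_lt_one hp0 hp1]
    rw [h1p, inv_div, pow_succ]
    rw [show M * (p ^ r * p) * ((M + b) / M) = p ^ r * (p * (M + b)) * (M / M) by ring]
    rw [div_self hM.ne', hpMb]
    ring
  have hLφl : ∀ l : ℕ, (∑' k : ℕ, φ (m - l - 1 - k)) = a * q ^ l := by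
    intro l
    have h1 : ∀ k : ℕ, φ (m - l - 1 - k) = (M * q ^ (l + 1)) * q ^ k := by
      intro k
      have h2 := hφl (l + 1 + k)
      rw [show m - ((l + 1 + k : ℕ) : ℤ) = m - l - 1 - k by push_cast; ring] at h2
      rw [h2, pow_add]
      ring
    rw [tsum_congr h1, tsum_mul_left, tsum_geometric_of_lt_one hq0 hq1]
    rw [h1q, inv_div, pow_succ]
    rw [show M * (q ^ l * q) * ((M + a) / M) = q ^ l * (q * (M + a)) * (M / M) by ring]
    rw [div_self hM.ne', hqMa]
    ring
  -- tail bounds for f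
  have hRfle : ∀ r : ℕ, Rt f (m + 1 + r) ≤ b * p ^ r := by
    intro r
    have hpos : 0 < Rt f m := by rw [hRm]; linarith
    have h := tail_geom hf0 hfs hlc1 hctg m hpos r
    rw [hRm, ← hbdef, ← hpdef] at h
    exact h
  have hLfle : ∀ l : ℕ, (∑' k : ℕ, f (m - l - 1 - k)) ≤ a * q ^ l := by
    intro l
    have he : (∑' k : ℕ, f (m - l - 1 - k)) = Rt g (-m + 1 + l) := by
      rw [Rt]
      apply tsum_congr
      intro k
      simp only [hgdef]
      congr 1
      ring
    have hpos : 0 < Rt g (-m) := by rw [hRgm]; linarith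
    have h := tail_geom hg0 hgs hglc hgctg (-m) hpos l
    rw [hRgm, ← hadef, ← hqdef] at h
    rw [he]
    exact h
  -- greedy split of k-1 into left/right steps
  have greedy : ∀ t : ℕ, ∃ l r : ℕ, l + r = t ∧ p ^ (r + 1) ≤ q ^ l ∧ q ^ (l + 1) ≤ p ^ r := by
    intro t
    induction t with
    | zero =>
      refine ⟨0, 0, rfl, ?_, ?_⟩
      · simpa using hp1.le
      · simpa using hq1.le
    | succ t ih =>
      obtain ⟨l, r, hlr, h1, h2⟩ := ih
      by_cases hcase : p ^ (r + 1) ≤ q ^ (l + 1)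
      · refine ⟨l + 1, r, by omega, hcase, ?_⟩
        calc q ^ (l + 1 + 1) ≤ q ^ (l + 1) := pow_le_pow_of_le_one hq0 hq1.le (by omega)
          _ ≤ p ^ r := h2
      · push_neg at hcase
        refine ⟨l, r + 1, by omega, ?_, hcase.le⟩
        calc p ^ (r + 1 + 1) ≤ p ^ (r + 1) := pow_le_pow_of_le_one hp0 hp1.le (by omega)
          _ ≤ q ^ l := h1
  have hbound_f : ∀ S : Finset ℤ, ∑ i ∈ S, f i ≤ 1 := by
    intro S
    calc ∑ i ∈ S, f i ≤ ∑' n, f n := Summable.sum_le_tsum S (fun i _ => hf0 i) hfs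
      _ = 1 := hf1
  have hmaj1 : ∀ k : ℕ, maxSum φ k ≤ maxSum f k := by
    intro k
    have hbddS : BddAbove (Set.range fun S : {S : Finset ℤ // S.card = k} => ∑ i ∈ S.1, f i) := by
      refine ⟨1, ?_⟩
      rintro x ⟨S, rfl⟩
      exact hbound_f S.1
    rcases Nat.eq_zero_or_pos k with hk | hk
    · subst hk
      haveI : Nonempty {S : Finset ℤ // S.card = 0} := ⟨⟨∅, Finset.card_empty⟩⟩
      rw [maxSum]
      apply ciSup_le
      intro S
      have hSe : S.1 = ∅ := Finset.card_eq_zero.1 S.2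
      rw [hSe, Finset.sum_empty]
      have h0 := le_ciSup hbddS ⟨∅, Finset.card_empty⟩
      simpa [maxSum] using h0
    · obtain ⟨t, rfl⟩ : ∃ t, k = t + 1 := ⟨k - 1, by omega⟩
      obtain ⟨l, r, hlr, hinv1, hinv2⟩ := greedy t
      set J : Finset ℤ := (Finset.range (t + 1)).map
        ⟨fun k : ℕ => m - l + k, fun x y hxy => by simpa using hxy⟩ with hJdef
      have hJcard : J.card = t + 1 := by rw [hJdef, Finset.card_map, Finset.card_range]
      have hJmem : ∀ n : ℤ, n ∈ J ↔ (m - l ≤ n ∧ n ≤ m + r) := by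
        intro n
        rw [hJdef, Finset.mem_map]
        constructor
        · rintro ⟨k, hk, rfl⟩
          simp only [Finset.mem_range] at hk
          show m - l ≤ m - l + (k : ℤ) ∧ m - l + (k : ℤ) ≤ m + r
          omega
        · rintro ⟨h1, h2⟩
          refine ⟨(n - (m - l)).toNat, ?_, ?_⟩
          · simp only [Finset.mem_range]; omega
          · show m - l + ((n - (m - l)).toNat : ℤ) = n; omega
      set c0 := M * min (q ^ l) (p ^ r) with hc0def
      have hc00 : 0 ≤ c0 := mul_nonneg hM.le (le_min (by positivity) (by positivity))
      have hin : ∀ n ∈ J, c0 ≤ φ n := by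
        intro n hn
        rw [hJmem] at hn
        rw [hφval n]
        split
        · next h =>
          have he : (n - m).toNat ≤ r := by omega
          have h5 : p ^ r ≤ p ^ (n - m).toNat := pow_le_pow_of_le_one hp0 hp1.le he
          exact mul_le_mul_of_nonneg_left (le_trans (min_le_right _ _) h5) hM.le
        · next h =>
          have he : (m - n).toNat ≤ l := by omega
          have h5 : q ^ l ≤ q ^ (m - n).toNat := pow_le_pow_of_le_one hq0 hq1.le he
          exact mul_le_mul_of_nonneg_left (le_trans (min_le_left _ _) h5) hM.le
      have hout : ∀ n ∉ J, φ n ≤ c0 := by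
        intro n hn
        rw [hJmem] at hn
        push_neg at hn
        rw [hφval n]
        split
        · next h =>
          have hbig : m + r < n := hn (by omega)
          have he : r + 1 ≤ (n - m).toNat := by omega
          have h3 : p ^ (n - m).toNat ≤ p ^ (r + 1) := pow_le_pow_of_le_one hp0 hp1.le he
          have h4 : p ^ (r + 1) ≤ min (q ^ l) (p ^ r) :=
            le_min hinv1 (pow_le_pow_of_le_one hp0 hp1.le (by omega))
          exact mul_le_mul_of_nonneg_left (le_trans h3 h4) hM.le
        · next h =>
          have hlt : n < m - l := by
            by_contra hcon
            push_neg at hcon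
            have := hn hcon
            omega
          have he : l + 1 ≤ (m - n).toNat := by omega
          have h3 : q ^ (m - n).toNat ≤ q ^ (l + 1) := pow_le_pow_of_le_one hq0 hq1.le he
          have h4 : q ^ (l + 1) ≤ min (q ^ l) (p ^ r) :=
            le_min (pow_le_pow_of_le_one hq0 hq1.le (by omega)) hinv2
          exact mul_le_mul_of_nonneg_left (le_trans h3 h4) hM.le
      -- sum of a summable function over the interval J
      have hsplit : ∀ (h : ℤ → ℝ) (T : ℝ), HasSum h T →
          (∑ i ∈ J, h i) = T - (∑' k : ℕ, h (m - l - 1 - k)) - Rt h (m + 1 + r) := by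
        intro h T hT
        have hsumm : Summable h := hT.summable
        have hL : Summable (fun k : ℕ => h (m - l - 1 - k)) := summable_shift_neg hsumm _
        have h7 := hasSum_int_split h (m - l - 1) hL.hasSum
          (summable_shift hsumm (m - l - 1 + 1)).hasSum
        have e0 : m - l - 1 + 1 = m - l := by ring
        rw [e0] at h7
        have hTeq : T = (∑' k : ℕ, h (m - l - 1 - k)) + Rt h (m - l) := hT.unique h7
        have hrange := Rt_range hsumm (t + 1) (m - l)
        have e1 : m - l + ((t + 1 : ℕ) : ℤ) = m + 1 + r := by push_cast; omega
        rw [e1] at hrange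
        have hsumJ : ∑ i ∈ J, h i = ∑ k ∈ Finset.range (t + 1), h (m - l + k) := by
          rw [hJdef, Finset.sum_map]
          rfl
        rw [hsumJ]
        rw [hrange] at hTeq
        linarith [hTeq]
      have hJφ : ∑ i ∈ J, φ i = 1 - a * q ^ l - b * p ^ r := by
        rw [hsplit φ 1 hφsum, hLφl l, hRφr r]
      have hJf : (1 : ℝ) - a * q ^ l - b * p ^ r ≤ ∑ i ∈ J, f i := by
        rw [hsplit f 1 (by rw [← hf1]; exact hfs.hasSum)]
        have h10 := hLfle l
        have h11 := hRfle r
        linarith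
      haveI : Nonempty {S : Finset ℤ // S.card = t + 1} := ⟨⟨J, hJcard⟩⟩
      rw [maxSum]
      apply ciSup_le
      intro S
      have h8 : ∑ i ∈ S.1, φ i ≤ ∑ i ∈ J, φ i :=
        exchange φ J S.1 (by rw [S.2, hJcard]) c0 hc00 hin hout
      have h9 : ∑ i ∈ J, f i ≤ maxSum f (t + 1) := le_ciSup hbddS ⟨J, hJcard⟩
      calc ∑ i ∈ S.1, φ i ≤ ∑ i ∈ J, φ i := h8
        _ = 1 - a * q ^ l - b * p ^ r := hJφ
        _ ≤ ∑ i ∈ J, f i := hJf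
        _ ≤ maxSum f (t + 1) := h9
  refine ⟨p, q, m, ⟨hp0, hp1⟩, ⟨hq0, hq1⟩, ?_, ?_, ?_⟩
  · show (⨆ n, φ n) = ⨆ n, f n
    rw [hsupφ, hsupf]
  · show ∀ k : ℕ, maxSum φ k ≤ maxSum f k
    exact hmaj1
  · show ∑' n, f n = ∑' n, φ n
    rw [hf1, hφ1]
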